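/- For the microgrid dynamics, the output h_0(x) = x_{2n+1} − x*_{2n+1} (bus voltage error) has relative degree 3: L_g h_0 ≡ 0 and L_g L_f h_0 ≡ 0 on the region v_L > 0, while L_g L_f^2 h_0(x) is a nonzero row vector with entries 1/(C_L L_j C_j) for each input j. -/

import Mathlib

open Finset ContinuousLinearMap

/-- Drift vector field of the single-bus DC microgrid (6), with state
x = (v, i_t, v_L). -/
noncomputable def drift (n : ℕ) (C L R : Fin n → ℝ) (CL RL PL : ℝ)
    (x : (Fin n → ℝ) × (Fin n → ℝ) × ℝ) : (Fin n → ℝ) × (Fin n → ℝ) × ℝ :=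
  (fun j => -(x.2.1 j) / C j,
   fun j => (x.1 j - R j * x.2.1 j - x.2.2) / L j,
   ((∑ j, x.2.1 j) - x.2.2 / RL - PL / x.2.2) / CL)

/-- j-th column of the control matrix g of (6): the input i_{s_j} enters only
the equation of v_j, with coefficient 1/C_j. -/
noncomputable def gcol (n : ℕ) (C : Fin n → ℝ) (j : Fin n) :
    (Fin n → ℝ) × (Fin n → ℝ) × ℝ :=
  (fun i => if i = j then 1 / C j else 0, 0, 0)

/-- Lie derivative of a scalar function along a vector field. -/
noncomputable def lieD {E : Type*} [NormedAddCommGroup E] [NormedSpace ℝ E]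
    (f : E → E) (h : E → ℝ) (x : E) : ℝ :=
  fderiv ℝ h x (f x)

namespace H0Aux

variable {n : ℕ}

noncomputable def Sm (n : ℕ) : ((Fin n → ℝ) × (Fin n → ℝ) × ℝ) →L[ℝ] ℝ :=
  (snd ℝ (Fin n → ℝ) ℝ).comp (snd ℝ (Fin n → ℝ) ((Fin n → ℝ) × ℝ))

noncomputable def Tm (n : ℕ) : ((Fin n → ℝ) × (Fin n → ℝ) × ℝ) →L[ℝ] ℝ :=
  (∑ i : Fin n, ContinuousLinearMap.proj i).comp
    ((fst ℝ (Fin n → ℝ) ℝ).comp (snd ℝ (Fin n → ℝ) ((Fin n → ℝ) × ℝ)))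

lemma Sm_apply (y : (Fin n → ℝ) × (Fin n → ℝ) × ℝ) : Sm n y = y.2.2 := rfl

lemma Tm_apply (y : (Fin n → ℝ) × (Fin n → ℝ) × ℝ) : Tm n y = ∑ i, y.2.1 i := by
  simp [Tm]

/-- ψ1 : function of (i_t, v_L) giving v̇_L -/
noncomputable def psi1 (n : ℕ) (RL PL CL : ℝ) (w : (Fin n → ℝ) × ℝ) : ℝ :=
  ((∑ i, w.1 i) - w.2 * RL⁻¹ - PL * w.2⁻¹) * CL⁻¹

/-- L_f h₀ computed explicitly. -/
lemma lieD_h0 (C L R : Fin n → ℝ) (CL RL PL vstar : ℝ) :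
    lieD (drift n C L R CL RL PL) (fun y => y.2.2 - vstar)
      = fun y => psi1 n RL PL CL y.2 := by
  funext y
  have h : HasFDerivAt (fun y : (Fin n → ℝ) × (Fin n → ℝ) × ℝ => y.2.2 - vstar)
      (Sm n) y := (Sm n).hasFDerivAt.sub_const vstar
  simp only [lieD, h.fderiv, Sm_apply, drift, psi1]
  ring

lemma diff_coord (i : Fin n) (w : (Fin n → ℝ) × ℝ) :
    DifferentiableAt ℝ (fun w : (Fin n → ℝ) × ℝ => w.1 i) w :=
  ((ContinuousLinearMap.proj i (R := ℝ) (φ := fun _ : Fin n => ℝ)).comp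
    (fst ℝ (Fin n → ℝ) ℝ)).differentiableAt

lemma diff_snd (w : (Fin n → ℝ) × ℝ) :
    DifferentiableAt ℝ (fun w : (Fin n → ℝ) × ℝ => w.2) w :=
  (snd ℝ (Fin n → ℝ) ℝ).differentiableAt

lemma diff_psi1 (RL PL CL : ℝ) (w : (Fin n → ℝ) × ℝ) (hw : w.2 ≠ 0) :
    DifferentiableAt ℝ (psi1 n RL PL CL) w :=
  (((DifferentiableAt.fun_sum fun i _ => diff_coord i w).sub
    ((diff_snd w).mul_const RL⁻¹)).sub
    (((diff_snd w).inv hw).const_mul PL)).mul_const CL⁻¹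

/-- the function L_f² h₀, written as linear part plus a function of (i_t, v_L). -/
noncomputable def chi (n : ℕ) (L R : Fin n → ℝ) (CL RL PL : ℝ)
    (w : (Fin n → ℝ) × ℝ) : ℝ :=
  ((∑ i, (0 - R i * w.1 i - w.2) * (L i)⁻¹)
    - psi1 n RL PL CL w * RL⁻¹
    + PL * (w.2 ^ 2)⁻¹ * psi1 n RL PL CL w) * CL⁻¹

noncomputable def ellm (n : ℕ) (L : Fin n → ℝ) (CL : ℝ) :
    ((Fin n → ℝ) × (Fin n → ℝ) × ℝ) →L[ℝ] ℝ :=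
  CL⁻¹ • ((∑ i : Fin n, (L i)⁻¹ • (ContinuousLinearMap.proj i
      (R := ℝ) (φ := fun _ : Fin n => ℝ))).comp
    (fst ℝ (Fin n → ℝ) ((Fin n → ℝ) × ℝ)))

lemma ellm_apply (L : Fin n → ℝ) (CL : ℝ) (y : (Fin n → ℝ) × (Fin n → ℝ) × ℝ) :
    ellm n L CL y = CL⁻¹ * ∑ i, (L i)⁻¹ * y.1 i := by
  simp [ellm]

noncomputable def phi2 (n : ℕ) (L R : Fin n → ℝ) (CL RL PL : ℝ)
    (y : (Fin n → ℝ) × (Fin n → ℝ) × ℝ) : ℝ :=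
  ellm n L CL y + chi n L R CL RL PL y.2

lemma diff_chi (L R : Fin n → ℝ) (CL RL PL : ℝ) (hL : ∀ i, 0 < L i)
    (w : (Fin n → ℝ) × ℝ) (hw : w.2 ≠ 0) :
    DifferentiableAt ℝ (chi n L R CL RL PL) w := by
  have hsum : DifferentiableAt ℝ
      (fun w : (Fin n → ℝ) × ℝ => ∑ i, (0 - R i * w.1 i - w.2) * (L i)⁻¹) w :=
    DifferentiableAt.fun_sum fun i _ =>
      (((differentiableAt_const 0).sub ((diff_coord i w).const_mul (R i))).sub
        (diff_snd w)).mul_const (L i)⁻¹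
  have hpsi := diff_psi1 (n := n) RL PL CL w hw
  have hsq : DifferentiableAt ℝ (fun w : (Fin n → ℝ) × ℝ => PL * (w.2 ^ 2)⁻¹) w :=
    (((diff_snd w).pow 2).inv (pow_ne_zero 2 hw)).const_mul PL
  exact ((hsum.sub (hpsi.mul_const RL⁻¹)).add (hsq.mul hpsi)).mul_const CL⁻¹

/-- key pointwise computation: L_f (L_f h₀) = phi2 wherever v_L ≠ 0. -/
lemma lieD_psi1 (C L R : Fin n → ℝ) (CL RL PL : ℝ)
    (y : (Fin n → ℝ) × (Fin n → ℝ) × ℝ) (hy : y.2.2 ≠ 0) :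
    lieD (drift n C L R CL RL PL) (fun y => psi1 n RL PL CL y.2) y
      = phi2 n L R CL RL PL y := by
  have hT : HasFDerivAt (fun y : (Fin n → ℝ) × (Fin n → ℝ) × ℝ => ∑ i, y.2.1 i)
      (Tm n) y := by
    have h := (Tm n).hasFDerivAt (x := y)
    have he : ⇑(Tm n) = fun y : (Fin n → ℝ) × (Fin n → ℝ) × ℝ => ∑ i, y.2.1 i :=
      funext fun z => Tm_apply z
    rwa [he] at h
  have hS : HasFDerivAt (fun y : (Fin n → ℝ) × (Fin n → ℝ) × ℝ => y.2.2)
      (Sm n) y := (Sm n).hasFDerivAt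
  have hinv : HasFDerivAt (fun y : (Fin n → ℝ) × (Fin n → ℝ) × ℝ => PL * y.2.2⁻¹)
      ((PL * -(y.2.2 ^ 2)⁻¹) • Sm n) y := by
    have hd : HasDerivAt (fun r : ℝ => PL * r⁻¹) (PL * -(y.2.2 ^ 2)⁻¹) y.2.2 :=
      (hasDerivAt_inv hy).const_mul PL
    exact hd.comp_hasFDerivAt (f := fun y : (Fin n → ℝ) × (Fin n → ℝ) × ℝ => y.2.2) y hS
  have hphi : HasFDerivAt (fun y : (Fin n → ℝ) × (Fin n → ℝ) × ℝ =>
        psi1 n RL PL CL y.2)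
      (CL⁻¹ • (Tm n - RL⁻¹ • Sm n - (PL * -(y.2.2 ^ 2)⁻¹) • Sm n)) y := by
    have h1 := (hT.sub (hS.const_smul RL⁻¹)).sub hinv
    have h2 := h1.const_smul CL⁻¹
    have he : (fun x : (Fin n → ℝ) × (Fin n → ℝ) × ℝ =>
          CL⁻¹ • ((∑ i, x.2.1 i) - RL⁻¹ • x.2.2 - PL * x.2.2⁻¹))
        = fun x => psi1 n RL PL CL x.2 := funext fun z => by
      simp [psi1, smul_eq_mul]; ring
    rw [← he]; exact h2
  simp only [lieD, hphi.fderiv]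
  simp only [ContinuousLinearMap.smul_apply, ContinuousLinearMap.sub_apply,
    Sm_apply, Tm_apply, smul_eq_mul]
  simp only [phi2, ellm_apply, chi, psi1, drift]
  rw [show (∑ i, (y.1 i - R i * y.2.1 i - y.2.2) / L i)
      = (∑ i, (L i)⁻¹ * y.1 i) + ∑ i, (0 - R i * y.2.1 i - y.2.2) * (L i)⁻¹ by
    rw [← Finset.sum_add_distrib]; exact Finset.sum_congr rfl fun i _ => by ring]
  ring
end H0Aux

/-- the bus-voltage error output h₀(x) = v_L − v_L* has relative
degree 3 on {v_L > 0}: L_g h₀ ≡ 0, L_g L_f h₀ ≡ 0, and L_g L_f² h₀ is the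
nonzero row vector with entries 1/(C_L L_j C_j). -/
theorem h0_relative_degree_three
    (n : ℕ) (hn : 1 ≤ n)
    (C L R : Fin n → ℝ) (CL RL PL vstar : ℝ)
    (hC : ∀ j, 0 < C j) (hL : ∀ j, 0 < L j) (hR : ∀ j, 0 < R j)
    (hCL : 0 < CL) (hRL : 0 < RL) (hPL : 0 < PL) :
    ∀ x : (Fin n → ℝ) × (Fin n → ℝ) × ℝ, 0 < x.2.2 → ∀ j : Fin n,
      (fderiv ℝ (fun y : (Fin n → ℝ) × (Fin n → ℝ) × ℝ => y.2.2 - vstar) x)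
        (gcol n C j) = 0 ∧
      (fderiv ℝ (lieD (drift n C L R CL RL PL)
          (fun y => y.2.2 - vstar)) x) (gcol n C j) = 0 ∧
      (fderiv ℝ (lieD (drift n C L R CL RL PL)
          (lieD (drift n C L R CL RL PL) (fun y => y.2.2 - vstar))) x)
        (gcol n C j) = 1 / (CL * L j * C j) ∧
      1 / (CL * L j * C j) ≠ 0 := by
  intro x hx j
  have hne : x.2.2 ≠ 0 := ne_of_gt hx
  refine ⟨?_, ?_, ?_, ?_⟩
  · have h : HasFDerivAt (fun y : (Fin n → ℝ) × (Fin n → ℝ) × ℝ => y.2.2 - vstar)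
        (H0Aux.Sm n) x := (H0Aux.Sm n).hasFDerivAt.sub_const vstar
    rw [h.fderiv]
    simp [H0Aux.Sm_apply, gcol]
  · rw [H0Aux.lieD_h0]
    have hF := H0Aux.diff_psi1 (n := n) RL PL CL x.2 hne
    have hc : HasFDerivAt (fun y : (Fin n → ℝ) × (Fin n → ℝ) × ℝ =>
          H0Aux.psi1 n RL PL CL y.2)
        ((fderiv ℝ (H0Aux.psi1 n RL PL CL) x.2).comp
          (ContinuousLinearMap.snd ℝ (Fin n → ℝ) ((Fin n → ℝ) × ℝ))) x :=
      hF.hasFDerivAt.comp x hasFDerivAt_snd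
    rw [hc.fderiv]
    have h0 : (gcol n C j).2 = 0 := rfl
    simp [ContinuousLinearMap.comp_apply, h0]
  · rw [H0Aux.lieD_h0]
    have hev : (lieD (drift n C L R CL RL PL)
          (fun y => H0Aux.psi1 n RL PL CL y.2))
        =ᶠ[nhds x] H0Aux.phi2 n L R CL RL PL := by
      have hcont : ContinuousAt
          (fun y : (Fin n → ℝ) × (Fin n → ℝ) × ℝ => y.2.2) x :=
        (continuous_snd.comp continuous_snd).continuousAt
      filter_upwards [hcont.eventually_ne hne] with y hy
      exact H0Aux.lieD_psi1 C L R CL RL PL y hy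
    rw [hev.fderiv_eq]
    have hchi := H0Aux.diff_chi L R CL RL PL hL x.2 hne
    have hc : HasFDerivAt (fun y : (Fin n → ℝ) × (Fin n → ℝ) × ℝ =>
          H0Aux.chi n L R CL RL PL y.2)
        ((fderiv ℝ (H0Aux.chi n L R CL RL PL) x.2).comp
          (ContinuousLinearMap.snd ℝ (Fin n → ℝ) ((Fin n → ℝ) × ℝ))) x :=
      hchi.hasFDerivAt.comp x hasFDerivAt_snd
    have hphi2 : HasFDerivAt (H0Aux.phi2 n L R CL RL PL)
        (H0Aux.ellm n L CL + (fderiv ℝ (H0Aux.chi n L R CL RL PL) x.2).comp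
          (ContinuousLinearMap.snd ℝ (Fin n → ℝ) ((Fin n → ℝ) × ℝ))) x :=
      (H0Aux.ellm n L CL).hasFDerivAt.add hc
    rw [hphi2.fderiv]
    have h0 : (ContinuousLinearMap.snd ℝ (Fin n → ℝ) ((Fin n → ℝ) × ℝ))
        (gcol n C j) = 0 := rfl
    rw [ContinuousLinearMap.add_apply, ContinuousLinearMap.comp_apply, h0,
      map_zero, add_zero, H0Aux.ellm_apply]
    have hsum : (∑ i, (L i)⁻¹ * (gcol n C j).1 i) = (L j)⁻¹ * (1 / C j) := by
      simp only [gcol, mul_ite, mul_zero, mul_one]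
      simp [Finset.sum_ite_eq']
    rw [hsum]
    field_simp
  · have h1 := hCL
    have h2 := hL j
    have h3 := hC j
    have : (0:ℝ) < 1 / (CL * L j * C j) := by positivity
    exact ne_of_gt this
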